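/- arXiv:1103.3408 — 4 statements merged into one kernel-verified Lean document; each statement's English description precedes it below -/
import Mathlib

section
/- Every matrix U in U(2) can be written as U = exp(i P₂ λ₂₁) exp(i Y λ₁₂) exp(i P₁ λ₁₁) exp(i P₂ λ₂₂) with λ₂₁, λ₁₁, λ₂₂ ∈ [0, 2π] and λ₁₂ ∈ [0, π/2], where P₁ = diag(1,0), P₂ = diag(0,1) and Y = σ_y = [[0,−i],[i,0]]. -/
open Matrix Complex Real

/-- The Pauli matrix `σ_y`. -/
noncomputable def sigmaY : Matrix (Fin 2) (Fin 2) ℂ :=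
  !![0, -Complex.I; Complex.I, 0]

/-- `P₁ = diag(1,0)`. -/
noncomputable def P1 : Matrix (Fin 2) (Fin 2) ℂ := !![1, 0; 0, 0]

/-- `P₂ = diag(0,1)`. -/
noncomputable def P2 : Matrix (Fin 2) (Fin 2) ℂ := !![0, 0; 0, 1]

lemma phase (z : ℂ) : ∃ a ∈ Set.Icc (0:ℝ) (2*π),
    z = (‖z‖ : ℂ) * Complex.exp (Complex.I * a) := by
  rcases le_or_gt 0 z.arg with h | h
  · refine ⟨z.arg, ⟨h, le_trans z.arg_le_pi (by linarith [Real.pi_pos])⟩, ?_⟩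
    rw [mul_comm Complex.I]
    exact (Complex.norm_mul_exp_arg_mul_I z).symm
  · refine ⟨z.arg + 2*π, ⟨by linarith [Complex.neg_pi_lt_arg z], by linarith⟩, ?_⟩
    have : Complex.exp (Complex.I * (↑(z.arg + 2*π))) = Complex.exp (z.arg * Complex.I) := by
      push_cast
      rw [mul_add, Complex.exp_add, mul_comm Complex.I]
      simp [Complex.exp_eq_one_iff]
      exact ⟨1, by push_cast; ring⟩
    rw [this]
    exact (Complex.norm_mul_exp_arg_mul_I z).symm

lemma aligned (w1 w2 : ℂ) (r0 r1 : ℝ) (h1 : 0 ≤ r1)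
    (hw1 : ‖w1‖ = r0) (hw2 : ‖w2‖ = r1)
    (hal : (r0:ℂ) * w2 = (r1:ℂ) * w1) (hne : r0 + r1 ≠ 0) :
    ∃ a ∈ Set.Icc (0:ℝ) (2*π),
      w1 = (r0:ℂ) * Complex.exp (Complex.I * a) ∧
      w2 = (r1:ℂ) * Complex.exp (Complex.I * a) := by
  have h0 : 0 ≤ r0 := hw1 ▸ norm_nonneg w1
  set z := w1 + w2 with hz
  obtain ⟨a, ha, hza⟩ := phase z
  refine ⟨a, ha, ?_⟩
  rcases eq_or_ne r0 0 with hr0 | hr0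
  · have hw1z : w1 = 0 := by
      rw [← norm_eq_zero]; rw [hw1, hr0]
    have hzz : z = w2 := by rw [hz, hw1z, zero_add]
    have : ‖z‖ = r1 := by rw [hzz, hw2]
    constructor
    · rw [hw1z, hr0]; simp
    · rw [← hzz, hza, this]
  · have hr0c : (r0:ℂ) ≠ 0 := by exact_mod_cast hr0
    have hnec : (r0:ℂ) + r1 ≠ 0 := by exact_mod_cast hne
    have hze : (r0:ℂ) * z = ((r0:ℂ) + r1) * w1 := by
      rw [hz]; linear_combination hal
    have habs : ‖z‖ = r0 + r1 := by
      have := congrArg (‖·‖) hze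
      rw [norm_mul, norm_mul, Complex.norm_real, Real.norm_eq_abs, hw1] at this
      have h2 : ‖(r0:ℂ) + r1‖ = r0 + r1 := by
        rw [← Complex.ofReal_add, Complex.norm_real, Real.norm_eq_abs]
        exact _root_.abs_of_nonneg (by positivity)
      rw [h2, _root_.abs_of_nonneg h0] at this
      have hmul : r0 * ‖z‖ = r0 * (r0 + r1) := by linarith [this]
      exact mul_left_cancel₀ hr0 hmul
    have key1 : ((r0:ℂ) + r1) * w1 = ((r0:ℂ) + r1) * ((r0:ℂ) * Complex.exp (Complex.I * a)) := by
      rw [← hze, hza, habs]; push_cast; ring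
    have hw1e : w1 = (r0:ℂ) * Complex.exp (Complex.I * a) := mul_left_cancel₀ hnec key1
    refine ⟨hw1e, ?_⟩
    have key2 : (r0:ℂ) * w2 = (r0:ℂ) * ((r1:ℂ) * Complex.exp (Complex.I * a)) := by
      rw [hal, hw1e]; ring
    exact mul_left_cancel₀ hr0c key2
noncomputable def V : Matrix (Fin 2) (Fin 2) ℂ := !![1, 1; Complex.I, -Complex.I]

lemma hVinv : V⁻¹ = !![1/2, -Complex.I/2; 1/2, Complex.I/2] := by
  have : V * !![1/2, -Complex.I/2; 1/2, Complex.I/2] = 1 := by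
    ext i j
    fin_cases i <;> fin_cases j <;>
      · simp [V, Matrix.mul_apply, Fin.sum_univ_two, Matrix.one_apply]
        try ring_nf
        try simp [Complex.I_sq]
  exact Matrix.inv_eq_right_inv this

lemma hVunit : IsUnit V := by
  have : V * V⁻¹ = 1 := by
    rw [hVinv]
    ext i j
    fin_cases i <;> fin_cases j <;>
      · simp [V, Matrix.mul_apply, Fin.sum_univ_two, Matrix.one_apply]
        try ring_nf
        try simp [Complex.I_sq]
  exact Matrix.isUnit_iff_isUnit_det V |>.mpr (Matrix.isUnit_det_of_right_inverse this)

lemma expY (z : ℂ) : NormedSpace.exp ((Complex.I * z) • sigmaY) =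
    !![Complex.cos z, Complex.sin z; -Complex.sin z, Complex.cos z] := by
  have hD : Matrix.diagonal ![Complex.I * z, -(Complex.I * z)]
      = !![Complex.I * z, 0; 0, -(Complex.I * z)] := by
    ext i j; fin_cases i <;> fin_cases j <;> simp
  have hconj : (Complex.I * z) • sigmaY
      = V * Matrix.diagonal ![Complex.I * z, -(Complex.I * z)] * V⁻¹ := by
    rw [hVinv, hD]
    ext i j
    fin_cases i <;> fin_cases j <;>
      · simp [V, sigmaY, Matrix.mul_apply, Fin.sum_univ_two]
        try ring_nf
        try simp [Complex.I_sq]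
        try ring_nf
  have hc := Matrix.exp_conj V
    (Matrix.diagonal ![Complex.I * z, -(Complex.I * z)]) hVunit
  rw [hconj, hc, Matrix.exp_diagonal]
  have hd : NormedSpace.exp ![Complex.I * z, -(Complex.I * z)]
      = ![Complex.exp (Complex.I * z), Complex.exp (-(Complex.I * z))] := by
    rw [Pi.exp_def]; funext i; fin_cases i <;> simp [← Complex.exp_eq_exp_ℂ]
  have hD2 : Matrix.diagonal ![Complex.exp (Complex.I * z), Complex.exp (-(Complex.I * z))] =
      !![Complex.exp (Complex.I * z), 0; 0, Complex.exp (-(Complex.I * z))] := by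
    ext i j; fin_cases i <;> fin_cases j <;> simp
  rw [hd, hD2, hVinv]
  ext i j
  fin_cases i <;> fin_cases j <;>
    · simp [V, Matrix.mul_apply, Fin.sum_univ_two, Complex.cos, Complex.sin]
      try ring_nf
      try simp [Complex.I_sq]
      try ring_nf
lemma expP1 (z : ℂ) : NormedSpace.exp (z • P1) = !![Complex.exp z, 0; 0, 1] := by
  have h : z • P1 = Matrix.diagonal ![z, 0] := by
    ext i j; fin_cases i <;> fin_cases j <;> simp [P1, Matrix.diagonal]
  rw [h, Matrix.exp_diagonal]
  have : NormedSpace.exp ![z, (0:ℂ)] = ![Complex.exp z, 1] := by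
    rw [Pi.exp_def]
    funext i; fin_cases i <;> simp [← Complex.exp_eq_exp_ℂ]
  rw [this]
  ext i j; fin_cases i <;> fin_cases j <;> simp [Matrix.diagonal]

lemma expP2 (z : ℂ) : NormedSpace.exp (z • P2) = !![1, 0; 0, Complex.exp z] := by
  have h : z • P2 = Matrix.diagonal ![0, z] := by
    ext i j; fin_cases i <;> fin_cases j <;> simp [P2, Matrix.diagonal]
  rw [h, Matrix.exp_diagonal]
  have : NormedSpace.exp ![(0:ℂ), z] = ![1, Complex.exp z] := by
    rw [Pi.exp_def]
    funext i; fin_cases i <;> simp [← Complex.exp_eq_exp_ℂ]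
  rw [this]
  ext i j; fin_cases i <;> fin_cases j <;> simp [Matrix.diagonal]

/-- Every `U ∈ U(2)` can be written as
`exp(i P₂ λ₂₁) exp(i σ_y λ₁₂) exp(i P₁ λ₁₁) exp(i P₂ λ₂₂)` with
`λ₂₁, λ₁₁, λ₂₂ ∈ [0,2π]` and `λ₁₂ ∈ [0,π/2]`. -/
theorem u2_composite_parameterization
    (U : Matrix (Fin 2) (Fin 2) ℂ) (hU : U ∈ Matrix.unitaryGroup (Fin 2) ℂ) :
    ∃ l21 ∈ Set.Icc (0 : ℝ) (2 * π), ∃ l12 ∈ Set.Icc (0 : ℝ) (π / 2),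
      ∃ l11 ∈ Set.Icc (0 : ℝ) (2 * π), ∃ l22 ∈ Set.Icc (0 : ℝ) (2 * π),
        U = NormedSpace.exp ((Complex.I * (l21 : ℂ)) • P2) *
              NormedSpace.exp ((Complex.I * (l12 : ℂ)) • sigmaY) *
              NormedSpace.exp ((Complex.I * (l11 : ℂ)) • P1) *
              NormedSpace.exp ((Complex.I * (l22 : ℂ)) • P2) := by
  have hUs : U * star U = 1 := hU.2
  have hsU : star U * U = 1 := hU.1
  have hA : U 0 0 * (starRingEnd ℂ) (U 0 0) + U 0 1 * (starRingEnd ℂ) (U 0 1) = 1 := by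
    have h : (U * star U) 0 0 = (1 : Matrix (Fin 2) (Fin 2) ℂ) 0 0 := by rw [hUs]
    simpa [Matrix.mul_apply, Fin.sum_univ_two, Matrix.one_apply, Matrix.star_apply] using h
  have hB : U 1 0 * (starRingEnd ℂ) (U 1 0) + U 1 1 * (starRingEnd ℂ) (U 1 1) = 1 := by
    have h : (U * star U) 1 1 = (1 : Matrix (Fin 2) (Fin 2) ℂ) 1 1 := by rw [hUs]
    simpa [Matrix.mul_apply, Fin.sum_univ_two, Matrix.one_apply, Matrix.star_apply] using h
  have hC : (starRingEnd ℂ) (U 0 0) * U 0 0 + (starRingEnd ℂ) (U 1 0) * U 1 0 = 1 := by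
    have h : (star U * U) 0 0 = (1 : Matrix (Fin 2) (Fin 2) ℂ) 0 0 := by rw [hsU]
    simpa [Matrix.mul_apply, Fin.sum_univ_two, Matrix.one_apply, Matrix.star_apply] using h
  have hD : U 1 0 * (starRingEnd ℂ) (U 0 0) + U 1 1 * (starRingEnd ℂ) (U 0 1) = 0 := by
    have h : (U * star U) 1 0 = (1 : Matrix (Fin 2) (Fin 2) ℂ) 1 0 := by rw [hUs]
    simpa [Matrix.mul_apply, Fin.sum_univ_two, Matrix.one_apply, Matrix.star_apply] using h
  set r0 : ℝ := ‖U 0 0‖ with hr0def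
  set r1 : ℝ := ‖U 0 1‖ with hr1def
  have h0 : 0 ≤ r0 := norm_nonneg _
  have h1 : 0 ≤ r1 := norm_nonneg _
  -- squared norm identities
  have hA' : r0 ^ 2 + r1 ^ 2 = 1 := by
    have := hA
    rw [Complex.mul_conj, Complex.mul_conj] at this
    rw [hr0def, hr1def, Complex.sq_norm, Complex.sq_norm]
    exact_mod_cast this
  have hC' : r0 ^ 2 + ‖U 1 0‖ ^ 2 = 1 := by
    have := hC
    rw [mul_comm ((starRingEnd ℂ) (U 0 0)), mul_comm ((starRingEnd ℂ) (U 1 0)),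
      Complex.mul_conj, Complex.mul_conj] at this
    rw [hr0def, Complex.sq_norm, Complex.sq_norm]
    exact_mod_cast this
  have hB' : ‖U 1 0‖ ^ 2 + ‖U 1 1‖ ^ 2 = 1 := by
    have := hB
    rw [Complex.mul_conj, Complex.mul_conj] at this
    rw [Complex.sq_norm, Complex.sq_norm]
    exact_mod_cast this
  have habs10 : ‖U 1 0‖ = r1 := by
    have hsq : ‖U 1 0‖ ^ 2 = r1 ^ 2 := by linarith
    calc ‖U 1 0‖ = √(‖U 1 0‖ ^ 2) := (Real.sqrt_sq (norm_nonneg _)).symm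
    _ = √(r1 ^ 2) := by rw [hsq]
    _ = r1 := Real.sqrt_sq h1
  have habs11 : ‖U 1 1‖ = r0 := by
    have hsq : ‖U 1 1‖ ^ 2 = r0 ^ 2 := by nlinarith
    calc ‖U 1 1‖ = √(‖U 1 1‖ ^ 2) := (Real.sqrt_sq (norm_nonneg _)).symm
    _ = √(r0 ^ 2) := by rw [hsq]
    _ = r0 := Real.sqrt_sq h0
  -- phases of the first row
  obtain ⟨c, hcmem, hc2⟩ := phase (U 0 0)
  obtain ⟨d, hdmem, hd2⟩ := phase (U 0 1)
  rw [← hr0def] at hc2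
  rw [← hr1def] at hd2
  -- the aligned pair
  have hiv : ∀ t : ℝ, Complex.exp (-(Complex.I * t)) * Complex.exp (Complex.I * t) = 1 := by
    intro t; rw [← Complex.exp_add]; simp
  set w1 : ℂ := U 1 1 * Complex.exp (-(Complex.I * d)) with hw1def
  set w2 : ℂ := -(U 1 0) * Complex.exp (-(Complex.I * c)) with hw2def
  have habsexp : ∀ t : ℝ, ‖Complex.exp (-(Complex.I * t))‖ = 1 := by
    intro t
    rw [Complex.norm_exp]
    simp
  have hw1abs : ‖w1‖ = r0 := by
    rw [hw1def, norm_mul, habs11, habsexp, mul_one]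
  have hw2abs : ‖w2‖ = r1 := by
    rw [hw2def, norm_mul, norm_neg, habs10, habsexp, mul_one]
  have hconjc : (starRingEnd ℂ) (U 0 0) = (r0 : ℂ) * Complex.exp (-(Complex.I * c)) := by
    rw [hc2, _root_.map_mul, ← Complex.exp_conj]
    simp [Complex.conj_ofReal]
    try ring_nf
  have hconjd : (starRingEnd ℂ) (U 0 1) = (r1 : ℂ) * Complex.exp (-(Complex.I * d)) := by
    rw [hd2, _root_.map_mul, ← Complex.exp_conj]
    simp [Complex.conj_ofReal]
    try ring_nf
  have hal : (r0 : ℂ) * w2 = (r1 : ℂ) * w1 := by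
    rw [hw1def, hw2def]
    have := hD
    rw [hconjc, hconjd] at this
    linear_combination -this
  have hne : r0 + r1 ≠ 0 := by
    intro h
    have hr0z : r0 = 0 := by linarith
    have hr1z : r1 = 0 := by linarith
    rw [hr0z, hr1z] at hA'
    norm_num at hA'
  obtain ⟨a, hamem, hw1eq, hw2eq⟩ := aligned w1 w2 r0 r1 h1 hw1abs hw2abs hal hne
  -- the angle b
  have hr0le : r0 ≤ 1 := by nlinarith
  set b : ℝ := Real.arccos r0 with hbdef
  have hbmem : b ∈ Set.Icc (0:ℝ) (π/2) :=
    ⟨Real.arccos_nonneg _, Real.arccos_le_pi_div_two.mpr h0⟩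
  have hcosb : Real.cos b = r0 := Real.cos_arccos (by linarith) hr0le
  have hsinb : Real.sin b = r1 := by
    rw [hbdef, Real.sin_arccos]
    have : 1 - r0 ^ 2 = r1 ^ 2 := by linarith
    rw [this, Real.sqrt_sq h1]
  refine ⟨a, hamem, b, hbmem, c, hcmem, d, hdmem, ?_⟩
  rw [expP2, expP2, expP1, expY]
  have hcos : Complex.cos (b : ℂ) = (r0 : ℂ) := by
    rw [← Complex.ofReal_cos, hcosb]
  have hsin : Complex.sin (b : ℂ) = (r1 : ℂ) := by
    rw [← Complex.ofReal_sin, hsinb]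
  rw [hcos, hsin]
  ext i j
  fin_cases i <;> fin_cases j <;>
    simp only [Matrix.mul_apply, Fin.sum_univ_two, Matrix.cons_val', Matrix.cons_val_zero,
      Matrix.cons_val_one, Matrix.head_cons, Matrix.head_fin_const, Matrix.empty_val',
      Matrix.cons_val_fin_one, Matrix.of_apply, Fin.isValue, Fin.zero_eta, Fin.mk_one]
  · -- (0,0)
    rw [hc2]; ring
  · rw [hd2]; ring
  · linear_combination (-(Complex.exp (Complex.I * (c:ℂ)))) * hw2eq - (U 1 0) * (hiv c)
  · linear_combination (Complex.exp (Complex.I * (d:ℂ))) * hw1eq - (U 1 1) * (hiv d)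
end

section
/- Let a₁₁, a₂₁ be complex numbers with a₁₁ ≠ 0 and a₂₁ ≠ 0. Then there exist λ₂₁ ∈ [0, π] and λ₁₂ ∈ [0, π/2] such that e^{−iλ₂₁} sin(λ₁₂) a₁₁ + e^{iλ₂₁} cos(λ₁₂) a₂₁ = 0. (The required conditions are arg(e^{2iλ₂₁} a₂₁) = arg(−a₁₁) and tan(λ₁₂) = |a₂₁|/|a₁₁|.) -/
open Complex Real

/-- The elimination step: for nonzero `a₁₁, a₂₁` there exist `λ₂₁ ∈ [0,π]` and
`λ₁₂ ∈ [0,π/2]` with `e^{-iλ₂₁} sin(λ₁₂) a₁₁ + e^{iλ₂₁} cos(λ₁₂) a₂₁ = 0`. -/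
theorem elimination_step (a11 a21 : ℂ) (h11 : a11 ≠ 0) (h21 : a21 ≠ 0) :
    ∃ l21 ∈ Set.Icc (0 : ℝ) π, ∃ l12 ∈ Set.Icc (0 : ℝ) (π / 2),
      Complex.exp (-Complex.I * (l21 : ℂ)) * (Real.sin l12 : ℂ) * a11 +
        Complex.exp (Complex.I * (l21 : ℂ)) * (Real.cos l12 : ℂ) * a21 = 0 := by
  set r1 : ℝ := ‖a11‖ with hr1
  set r2 : ℝ := ‖a21‖ with hr2
  have hr1pos : 0 < r1 := norm_pos_iff.mpr h11
  have hr2pos : 0 < r2 := norm_pos_iff.mpr h21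
  -- the unit complex number u
  set u : ℂ := -(a11 * (r2 : ℂ)) / (a21 * (r1 : ℂ)) with hu
  have hune : u ≠ 0 := by
    apply div_ne_zero
    · simp [h11, hr2pos.ne']
    · simp [h21, hr1pos.ne']
  have habsu : ‖u‖ = 1 := by
    rw [hu, norm_div, norm_neg, norm_mul, norm_mul, Complex.norm_real,
      Complex.norm_real, Real.norm_of_nonneg hr2pos.le, Real.norm_of_nonneg hr1pos.le, ← hr1, ← hr2]
    field_simp
  -- choose λ
  set φ : ℝ := Complex.arg u with hφ
  have hφ1 : -π < φ := Complex.neg_pi_lt_arg u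
  have hφ2 : φ ≤ π := Complex.arg_le_pi u
  have hπ := Real.pi_pos
  set l : ℝ := if 0 ≤ φ then φ / 2 else φ / 2 + π with hl
  have hlmem : l ∈ Set.Icc (0 : ℝ) π := by
    rw [hl]; split_ifs with h
    · constructor <;> nlinarith
    · constructor <;> nlinarith
  have hexp : Complex.exp (Complex.I * (2 * l)) = u := by
    have key : Complex.exp ((φ : ℂ) * Complex.I) = u := by
      have := Complex.norm_mul_exp_arg_mul_I u
      rwa [habsu, Complex.ofReal_one, one_mul] at this
    rw [hl]; split_ifs with h
    · rw [← key]; congr 1; push_cast; ring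
    · rw [← key]
      have : Complex.I * ((2:ℂ) * ((φ/2 + π : ℝ) : ℂ)) =
          (φ : ℂ) * Complex.I + 2 * π * Complex.I := by push_cast; ring
      rw [this, Complex.exp_add, Complex.exp_two_pi_mul_I, mul_one]
  -- choose μ
  set x : ℝ := r2 / r1 with hx
  have hxpos : 0 < x := div_pos hr2pos hr1pos
  set μ : ℝ := Real.arctan x with hμ
  have hμmem : μ ∈ Set.Icc (0 : ℝ) (π / 2) := by
    constructor
    · rw [hμ, ← Real.arctan_zero]
      exact (Real.arctan_strictMono hxpos).le
    · exact (Real.arctan_lt_pi_div_two x).le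
  have hsqrtpos : 0 < Real.sqrt (1 + x ^ 2) := by positivity
  have hsin : Real.sin μ = x / Real.sqrt (1 + x ^ 2) := Real.sin_arctan x
  have hcos : Real.cos μ = 1 / Real.sqrt (1 + x ^ 2) := Real.cos_arctan x
  have hkey : Real.sin μ * r1 = Real.cos μ * r2 := by
    rw [hsin, hcos, hx]
    field_simp
  refine ⟨l, hlmem, μ, hμmem, ?_⟩
  have hfactor : Complex.exp (-Complex.I * (l : ℂ)) * (Real.sin μ : ℂ) * a11 +
      Complex.exp (Complex.I * (l : ℂ)) * (Real.cos μ : ℂ) * a21 =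
      Complex.exp (-Complex.I * (l : ℂ)) *
        ((Real.sin μ : ℂ) * a11 + Complex.exp (Complex.I * (2 * l)) * (Real.cos μ : ℂ) * a21) := by
    rw [mul_add]
    congr 1
    · ring
    · rw [← mul_assoc, ← mul_assoc, ← Complex.exp_add]
      ring_nf
  rw [hfactor, hexp]
  apply mul_eq_zero_of_right
  rw [hu]
  have ha21ne : (a21 * (r1 : ℂ)) ≠ 0 := by simp [h21, hr1pos.ne']
  have hr1c : (r1 : ℂ) ≠ 0 := by exact_mod_cast hr1pos.ne'
  field_simp
  have h2 : ((Real.sin μ * r1 : ℝ) : ℂ) = ((Real.cos μ * r2 : ℝ) : ℂ) := by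
    exact Complex.ofReal_inj.mpr hkey
  push_cast at h2
  rw [← Complex.ofReal_sin, ← Complex.ofReal_cos] at h2
  linear_combination a11 * h2
end

section
/- For 2 ≤ m ≤ d define O_{m,1} = ∏_{n=m}^{d} exp(i Y_{1,n} λ_{1,n}) (product in increasing order of n). Then ⟨m| O_{m,1} |1⟩ = −sin(λ_{1,m}) ∏_{n=m+1}^{d} cos(λ_{1,n}), ⟨m| O_{m,1} |m⟩ = cos(λ_{1,m}), ⟨1| O_{m,1} |m⟩ = sin(λ_{1,m}), and ⟨1| O_{m,1} |1⟩ = ∏_{n=m}^{d} cos(λ_{1,n}). -/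
open Matrix Complex

/-- `Y m n = -i |m⟩⟨n| + i |n⟩⟨m|`. -/
noncomputable def Ymat {d : ℕ} (m n : Fin d) : Matrix (Fin d) (Fin d) ℂ :=
  (-Complex.I) • Matrix.single m n 1 + Complex.I • Matrix.single n m 1


open NormedSpace in
theorem exp_smul_idem {A : Type*} [NormedRing A] [NormedAlgebra ℂ A] [CompleteSpace A]
    (a : ℂ) (Q : A) (hQ : Q * Q = Q) :
    NormedSpace.exp (a • Q) = 1 + (Complex.exp a - 1) • Q := by
  have hpow : ∀ n : ℕ, Q ^ (n + 1) = Q := by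
    intro n; induction n with
    | zero => simp
    | succ n ih => rw [pow_succ, ih, hQ]
  have hsum : Summable (fun n : ℕ => ((Nat.factorial n : ℂ))⁻¹ • (a • Q) ^ n) :=
    expSeries_summable' (𝕂 := ℂ) _
  have hsc : Summable (fun n : ℕ => ((Nat.factorial n : ℂ))⁻¹ • a ^ n) :=
    expSeries_summable' (𝕂 := ℂ) a
  have hsc' : Summable (fun n : ℕ => ((Nat.factorial (n+1) : ℂ))⁻¹ * a ^ (n + 1)) := by
    have := (hsc.comp_injective (add_left_injective 1))
    simpa [Function.comp_def, smul_eq_mul] using this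
  have hexp : Complex.exp a = 1 + ∑' n : ℕ, ((Nat.factorial (n+1) : ℂ))⁻¹ * a ^ (n + 1) := by
    rw [Complex.exp_eq_exp_ℂ]; simp only [exp_eq_tsum ℂ]; rw [hsc.tsum_eq_zero_add]
    simp [smul_eq_mul]
  simp only [exp_eq_tsum ℂ]; rw [hsum.tsum_eq_zero_add]
  have h1 : ∀ n : ℕ, ((Nat.factorial (n+1) : ℂ))⁻¹ • (a • Q) ^ (n + 1)
      = (((Nat.factorial (n+1) : ℂ))⁻¹ * a ^ (n + 1)) • Q := by
    intro n
    rw [smul_pow, hpow, smul_smul]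
  simp only [h1, pow_zero]
  rw [hsc'.tsum_smul_const]
  rw [hexp]
  simp

open NormedSpace in
theorem rot_formula {A : Type*} [NormedRing A] [NormedAlgebra ℂ A] [CompleteSpace A]
    (P B : A) (hPP : P * P = P) (hPB : P * B = B) (hBP : B * P = B) (hBB : B * B = -P)
    (t : ℂ) :
    NormedSpace.exp (t • B) = 1 + (Complex.cos t - 1) • P + Complex.sin t • B := by
  obtain ⟨Qp, hQp⟩ : ∃ Q, Q = (2:ℂ)⁻¹ • (P + Complex.I • B) := ⟨_, rfl⟩
  obtain ⟨Qm, hQm⟩ : ∃ Q, Q = (2:ℂ)⁻¹ • (P - Complex.I • B) := ⟨_, rfl⟩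
  have hQpQp : Qp * Qp = Qp := by
    rw [hQp]
    simp only [smul_add, smul_sub, add_mul, mul_add, sub_mul, mul_sub, smul_mul_assoc,
      mul_smul_comm, smul_smul, hPP, hPB, hBP, hBB]
    match_scalars <;> (ring_nf; try (simp [Complex.I_sq]; try ring))
  have hQmQm : Qm * Qm = Qm := by
    rw [hQm]
    simp only [smul_add, smul_sub, add_mul, mul_add, sub_mul, mul_sub, smul_mul_assoc,
      mul_smul_comm, smul_smul, hPP, hPB, hBP, hBB]
    match_scalars <;> (ring_nf; try (simp [Complex.I_sq]; try ring))
  have hQpQm : Qp * Qm = 0 := by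
    rw [hQp, hQm]
    simp only [smul_add, smul_sub, add_mul, mul_add, sub_mul, mul_sub, smul_mul_assoc,
      mul_smul_comm, smul_smul, hPP, hPB, hBP, hBB]
    match_scalars <;> (ring_nf; try (simp [Complex.I_sq]; try ring))
  have hQmQp : Qm * Qp = 0 := by
    rw [hQp, hQm]
    simp only [smul_add, smul_sub, add_mul, mul_add, sub_mul, mul_sub, smul_mul_assoc,
      mul_smul_comm, smul_smul, hPP, hPB, hBP, hBB]
    match_scalars <;> (ring_nf; try (simp [Complex.I_sq]; try ring))
  have harg : t • B = ((-Complex.I * t) • Qp) + ((Complex.I * t) • Qm) := by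
    rw [hQp, hQm]
    match_scalars <;> (ring_nf; try (simp [Complex.I_sq]; try ring))
  letI : NormedAlgebra ℚ A := .restrictScalars ℚ ℂ A
  rw [harg, NormedSpace.exp_add_of_commute, exp_smul_idem _ _ hQpQp, exp_smul_idem _ _ hQmQm]
  · simp only [add_mul, mul_add, one_mul, mul_one, smul_mul_assoc, mul_smul_comm, smul_smul,
      hQpQm, smul_zero, add_zero]
    have e1 : Complex.exp (-Complex.I * t) = Complex.cos t - Complex.sin t * Complex.I := by
      rw [show -Complex.I * t = (-t) * Complex.I by ring, Complex.exp_mul_I]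
      simp [Complex.cos_neg, Complex.sin_neg]; ring
    have e2 : Complex.exp (Complex.I * t) = Complex.cos t + Complex.sin t * Complex.I := by
      rw [show Complex.I * t = t * Complex.I by ring, Complex.exp_mul_I]
    rw [e1, e2, hQp, hQm]
    match_scalars <;> (ring_nf; try (simp [Complex.I_sq]; try ring))
  · show _ = _
    simp only [smul_mul_assoc, mul_smul_comm, hQpQm, hQmQp, smul_zero]

noncomputable def Rot {d : ℕ} (z : Fin d) (lam : Fin d → ℝ) (n : Fin d) :
    Matrix (Fin d) (Fin d) ℂ :=
  1 + (((Real.cos (lam n) : ℝ) : ℂ) - 1) •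
        (Matrix.single z z 1 + Matrix.single n n 1)
    + ((Real.sin (lam n) : ℝ) : ℂ) •
        (Matrix.single z n 1 - Matrix.single n z 1)

open NormedSpace in
theorem exp_rot {d : ℕ} (z n : Fin d) (hzn : z ≠ n) (lam : Fin d → ℝ) :
    NormedSpace.exp ((Complex.I * (lam n : ℂ)) • Ymat z n) = Rot z lam n := by
  letI : SeminormedRing (Matrix (Fin d) (Fin d) ℂ) := Matrix.linftyOpSemiNormedRing
  letI : NormedRing (Matrix (Fin d) (Fin d) ℂ) := Matrix.linftyOpNormedRing
  letI : NormedAlgebra ℂ (Matrix (Fin d) (Fin d) ℂ) := Matrix.linftyOpNormedAlgebra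
  have hnz : n ≠ z := hzn.symm
  set P : Matrix (Fin d) (Fin d) ℂ := Matrix.single z z 1 + Matrix.single n n 1 with hP
  set B : Matrix (Fin d) (Fin d) ℂ := Matrix.single z n 1 - Matrix.single n z 1 with hB
  have hPP : P * P = P := by
    simp only [hP, add_mul, mul_add, Matrix.single_mul_single_same,
      Matrix.single_mul_single_of_ne _ _ _ _ hzn, Matrix.single_mul_single_of_ne _ _ _ _ hnz]
    try simp
    try abel
  have hPB : P * B = B := by
    simp only [hP, hB, add_mul, mul_sub, Matrix.single_mul_single_same,
      Matrix.single_mul_single_of_ne _ _ _ _ hzn, Matrix.single_mul_single_of_ne _ _ _ _ hnz]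
    try simp
    try abel
  have hBP : B * P = B := by
    simp only [hP, hB, sub_mul, mul_add, Matrix.single_mul_single_same,
      Matrix.single_mul_single_of_ne _ _ _ _ hzn, Matrix.single_mul_single_of_ne _ _ _ _ hnz]
    try simp
    try abel
  have hBB : B * B = -P := by
    simp only [hP, hB, sub_mul, mul_sub, Matrix.single_mul_single_same,
      Matrix.single_mul_single_of_ne _ _ _ _ hzn, Matrix.single_mul_single_of_ne _ _ _ _ hnz]
    try simp
    try abel
  have harg : (Complex.I * (lam n : ℂ)) • Ymat z n = ((lam n : ℂ)) • B := by
    rw [Ymat, hB]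
    match_scalars <;> (ring_nf; try (simp [Complex.I_sq]; try ring))
  rw [harg]
  refine (rot_formula P B hPP hPB hBP hBB _).trans ?_
  rw [Rot, ← Complex.ofReal_cos, ← Complex.ofReal_sin]

section ProdLemmas

variable {d : ℕ} (z : Fin d) (lam : Fin d → ℝ)

theorem row_id (j : Fin d) (hjz : j ≠ z) :
    ∀ t : List (Fin d), (∀ x ∈ t, j ≠ x) →
      Matrix.single j j (1:ℂ) * (t.map (Rot z lam)).prod =
        Matrix.single j j 1 := by
  intro t
  induction t with
  | nil => simp
  | cons a t ih =>
    intro h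
    have hja : j ≠ a := h a (by simp)
    have hrest := ih (fun x hx => h x (by simp [hx]))
    rw [List.map_cons, List.prod_cons, ← mul_assoc]
    have key : Matrix.single j j (1:ℂ) * Rot z lam a = Matrix.single j j 1 := by
      simp [Rot, mul_add, mul_sub, mul_one, mul_smul_comm, hjz, hja]
    rw [key, hrest]

theorem col_id (j : Fin d) (hzj : z ≠ j) :
    ∀ t : List (Fin d), (∀ x ∈ t, x ≠ j) →
      (t.map (Rot z lam)).prod * Matrix.single j j (1:ℂ) =
        Matrix.single j j 1 := by
  intro t
  induction t with
  | nil => simp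
  | cons a t ih =>
    intro h
    have haj : a ≠ j := h a (by simp)
    have hrest := ih (fun x hx => h x (by simp [hx]))
    rw [List.map_cons, List.prod_cons, mul_assoc, hrest]
    simp [Rot, add_mul, sub_mul, one_mul, smul_mul_assoc, hzj, haj]

theorem row_entry (j : Fin d) (hjz : j ≠ z) (t : List (Fin d)) (ht : ∀ x ∈ t, j ≠ x)
    (k : Fin d) :
    (t.map (Rot z lam)).prod j k = Matrix.single j j (1:ℂ) j k := by
  have h := congrFun (congrFun (row_id z lam j hjz t ht) j) k
  simpa using h

theorem col_entry (j : Fin d) (hzj : z ≠ j) (t : List (Fin d)) (ht : ∀ x ∈ t, x ≠ j)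
    (k : Fin d) :
    (t.map (Rot z lam)).prod k j = Matrix.single j j (1:ℂ) k j := by
  have h := congrFun (congrFun (col_id z lam j hzj t ht) k) j
  simpa using h

theorem prod_zz :
    ∀ t : List (Fin d), t.Nodup → (∀ x ∈ t, z ≠ x) →
      (t.map (Rot z lam)).prod z z =
        (t.map (fun n => ((Real.cos (lam n) : ℝ) : ℂ))).prod := by
  intro t
  induction t with
  | nil => simp
  | cons a t ih =>
    intro hnd h
    have hza : z ≠ a := h a (by simp)
    have hat : ∀ x ∈ t, a ≠ x := by
      intro x hx
      rintro rfl
      exact (List.nodup_cons.mp hnd).1 hx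
    have hrest := ih (List.nodup_cons.mp hnd).2 (fun x hx => h x (by simp [hx]))
    rw [List.map_cons, List.prod_cons, List.map_cons, List.prod_cons]
    have haz : (t.map (Rot z lam)).prod a z = 0 := by
      rw [row_entry z lam a hza.symm t hat z]
      simp [Matrix.single, hza.symm]
    have main : (Rot z lam a * (t.map (Rot z lam)).prod) z z =
        ((Real.cos (lam a) : ℝ) : ℂ) * (t.map (Rot z lam)).prod z z := by
      simp only [Rot, add_mul, sub_mul, smul_mul_assoc, one_mul, Matrix.add_apply,
        Matrix.smul_apply, Matrix.sub_apply]
      simp [hza, haz]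
      ring
    rw [main, hrest]

end ProdLemmas

theorem filter_le_sorted {d : ℕ} (m : Fin d) :
    ∀ l : List (Fin d), l.Pairwise (· < ·) → m ∈ l →
      l.filter (fun n => m ≤ n) = m :: l.filter (fun n => m < n) := by
  intro l
  induction l with
  | nil => intro _ h; simp at h
  | cons a t ih =>
    intro hp hm
    have hat : ∀ x ∈ t, a < x := fun x hx => (List.pairwise_cons.mp hp).1 x hx
    have hpt := (List.pairwise_cons.mp hp).2
    rcases List.mem_cons.mp hm with rfl | hmt
    · rw [List.filter_cons, List.filter_cons]
      have h1 : t.filter (fun n => m ≤ n) = t.filter (fun n => m < n) := by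
        apply List.filter_congr
        intro x hx
        simp [le_of_lt (hat x hx), hat x hx]
      simp [h1]
    · have ham : a < m := hat m hmt
      rw [List.filter_cons, List.filter_cons]
      have h2 : ¬ (m ≤ a) := not_le.mpr ham
      have h3 : ¬ (m < a) := not_lt.mpr (le_of_lt ham)
      simp only [h2, h3, decide_false, if_false]
      exact ih hpt hmt

theorem list_filter_prod_aux {d : ℕ} (p : Fin d → Prop) [DecidablePred p] (f : Fin d → ℂ) :
    ∀ l : List (Fin d),
      ((l.filter (fun n => p n)).map f).prod = (l.map (fun n => if p n then f n else 1)).prod := by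
  intro l
  induction l with
  | nil => simp
  | cons a t ih =>
    rw [List.filter_cons]
    by_cases h : p a <;> simp [h, ih]

theorem list_filter_prod {d : ℕ} (p : Fin d → Prop) [DecidablePred p] (f : Fin d → ℂ) :
    (((List.finRange d).filter (fun n => p n)).map f).prod =
      ∏ n ∈ Finset.univ.filter p, f n := by
  rw [Finset.prod_filter, Fin.prod_univ_def, list_filter_prod_aux]

/-- `O_{m,1} = ∏_{n ≥ m} exp(i Y_{1,n} λ_{1,n})`, product taken in increasing order of `n`;
the index `⟨0, hd⟩ : Fin d` plays the role of the basis vector `|1⟩`. -/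
noncomputable def Om1 {d : ℕ} (hd : 0 < d) (lam : Fin d → ℝ) (m : Fin d) :
    Matrix (Fin d) (Fin d) ℂ :=
  (((List.finRange d).filter (fun n => m ≤ n)).map
    (fun n => NormedSpace.exp ((Complex.I * (lam n : ℂ)) • Ymat ⟨0, hd⟩ n))).prod

/-- The four matrix elements of `O_{m,1}` used in the Haar-measure derivation. -/
theorem Om1_matrix_entries {d : ℕ} (hd : 0 < d) (lam : Fin d → ℝ)
    (m : Fin d) (hm : 0 < (m : ℕ)) :
    Om1 hd lam m m ⟨0, hd⟩ =
      -(Real.sin (lam m) : ℂ) *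
        ∏ n ∈ Finset.univ.filter (fun n : Fin d => m < n), ((Real.cos (lam n) : ℝ) : ℂ) ∧
    Om1 hd lam m m m = ((Real.cos (lam m) : ℝ) : ℂ) ∧
    Om1 hd lam m ⟨0, hd⟩ m = ((Real.sin (lam m) : ℝ) : ℂ) ∧
    Om1 hd lam m ⟨0, hd⟩ ⟨0, hd⟩ =
      ∏ n ∈ Finset.univ.filter (fun n : Fin d => m ≤ n), ((Real.cos (lam n) : ℝ) : ℂ) := by
  set z : Fin d := ⟨0, hd⟩ with hz
  have hzm : z < m := hm
  have hzm' : z ≠ m := ne_of_lt hzm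
  have hmz : m ≠ z := hzm'.symm
  -- rewrite Om1 using Rot
  have hmem : ∀ x ∈ (List.finRange d).filter (fun n => m ≤ n), z ≠ x := by
    intro x hx
    have := (List.mem_filter.mp hx).2
    have hmx : m ≤ x := by simpa using this
    exact ne_of_lt (lt_of_lt_of_le hzm hmx)
  have hOm : Om1 hd lam m =
      (((List.finRange d).filter (fun n => m ≤ n)).map (Rot z lam)).prod := by
    rw [Om1]
    congr 1
    apply List.map_congr_left
    intro x hx
    exact exp_rot z x (hmem x hx) lam
  have hdecomp : (List.finRange d).filter (fun n => m ≤ n)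
      = m :: (List.finRange d).filter (fun n => m < n) := by
    exact filter_le_sorted m _ (List.pairwise_lt_finRange d) (List.mem_finRange m)
  set L' : List (Fin d) := (List.finRange d).filter (fun n => m < n) with hL'
  have hL'mem : ∀ x ∈ L', m < x := by
    intro x hx
    have := (List.mem_filter.mp hx).2
    simpa using this
  have hL'nodup : L'.Nodup := (List.nodup_finRange d).filter _
  have hL'z : ∀ x ∈ L', z ≠ x := fun x hx => ne_of_lt (lt_trans hzm (hL'mem x hx))
  have hL'm : ∀ x ∈ L', m ≠ x := fun x hx => ne_of_lt (hL'mem x hx)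
  set Q : Matrix (Fin d) (Fin d) ℂ := (L'.map (Rot z lam)).prod with hQ
  have hOm2 : Om1 hd lam m = Rot z lam m * Q := by
    rw [hOm, hdecomp, List.map_cons, List.prod_cons]
  -- entries of Q
  have hQzz : Q z z = (L'.map (fun n => ((Real.cos (lam n) : ℝ) : ℂ))).prod :=
    prod_zz z lam L' hL'nodup hL'z
  have hQmz : Q m z = 0 := by
    rw [hQ, row_entry z lam m hmz L' hL'm z]
    simp [Matrix.single, hmz]
  have hQmm : Q m m = 1 := by
    rw [hQ, row_entry z lam m hmz L' hL'm m]
    simp [Matrix.single]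
  have hQzm : Q z m = 0 := by
    rw [hQ, col_entry z lam m hzm' L' (fun x hx => (hL'm x hx).symm) z]
    simp [Matrix.single, hzm', hmz]
  -- the cosine product over L'
  have hCprod : (L'.map (fun n => ((Real.cos (lam n) : ℝ) : ℂ))).prod =
      ∏ n ∈ Finset.univ.filter (fun n : Fin d => m < n), ((Real.cos (lam n) : ℝ) : ℂ) := by
    rw [hL', list_filter_prod]
  have hQzz2 : Q z z =
      ∏ n ∈ Finset.univ.filter (fun n : Fin d => m < n), Complex.cos ((lam n : ℝ) : ℂ) := by
    rw [hQzz, hCprod]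
    exact Finset.prod_congr rfl (fun x _ => (Complex.ofReal_cos _))
  refine ⟨?_, ?_, ?_, ?_⟩
  · rw [hOm2]
    simp only [Rot, add_mul, sub_mul, smul_mul_assoc, one_mul, Matrix.add_apply,
      Matrix.smul_apply, Matrix.sub_apply]
    simp [hmz, hQmz, hQzz2]
    try ring
  · rw [hOm2]
    simp only [Rot, add_mul, sub_mul, smul_mul_assoc, one_mul, Matrix.add_apply,
      Matrix.smul_apply, Matrix.sub_apply]
    simp [hmz, hQmm, hQzm]
    try ring
  · rw [hOm2]
    simp only [Rot, add_mul, sub_mul, smul_mul_assoc, one_mul, Matrix.add_apply,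
      Matrix.smul_apply, Matrix.sub_apply]
    simp [hzm', hQzm, hQmm]
  · rw [hOm2]
    have hfull : ∏ n ∈ Finset.univ.filter (fun n : Fin d => m ≤ n), ((Real.cos (lam n) : ℝ) : ℂ)
        = ((Real.cos (lam m) : ℝ) : ℂ) *
          ∏ n ∈ Finset.univ.filter (fun n : Fin d => m < n), ((Real.cos (lam n) : ℝ) : ℂ) := by
      rw [← list_filter_prod, ← list_filter_prod, hdecomp, List.map_cons, List.prod_cons]
    rw [hfull]
    simp only [Rot, add_mul, sub_mul, smul_mul_assoc, one_mul, Matrix.add_apply,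
      Matrix.smul_apply, Matrix.sub_apply]
    simp [hzm', hQzz2, hQmz]
    try ring
end

section
/- Let μ denote the normalized Haar (probability) measure on the unitary group U(d), d ≥ 1, and let p be an even natural number. Then ∫_{U(d)} |U₁₁|^p dμ(U) = ∏_{n=2}^{d} (2(n−1))/(2(n−1)+p), where U₁₁ denotes the (1,1) matrix entry. In particular for p = 4 this equals 2/(d(d+1)). -/
open Matrix MeasureTheory


open Matrix MeasureTheory
open scoped ComplexConjugate

noncomputable section HMaux

variable {d : ℕ}

/-- embedding of a 2×2 matrix `!![a, b; e, f]` into the `(r,t)` block of a `d×d` identity. -/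
def HMembed (r t : Fin d) (a b e f : ℂ) : Matrix (Fin d) (Fin d) ℂ :=
  fun i j => if i = r then (if j = r then a else if j = t then b else 0)
    else if i = t then (if j = r then e else if j = t then f else 0)
    else if i = j then 1 else 0

lemma HMsum_split {α : Type*} [AddCommMonoid α] {r t : Fin d} (h : r ≠ t) (g : Fin d → α) :
    ∑ m, g m = g r + g t + ∑ m ∈ Finset.univ \ {r, t}, g m := by
  have ht : t ∈ (Finset.univ : Finset (Fin d)).erase r :=
    Finset.mem_erase.2 ⟨h.symm, Finset.mem_univ t⟩
  have h1 : (Finset.univ : Finset (Fin d)) \ {r, t}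
      = ((Finset.univ : Finset (Fin d)).erase r).erase t := by
    ext m
    simp only [Finset.mem_sdiff, Finset.mem_insert, Finset.mem_singleton, Finset.mem_univ,
      true_and, not_or, Finset.mem_erase]
    tauto
  rw [h1, ← Finset.add_sum_erase _ g (Finset.mem_univ r), ← Finset.add_sum_erase _ g ht,
    add_assoc]

lemma HMmem_diff_iff (c r t : Fin d) :
    (c ∈ Finset.univ \ ({r, t} : Finset (Fin d))) ↔ (¬ c = r ∧ ¬ c = t) := by
  simp only [Finset.mem_sdiff, Finset.mem_insert, Finset.mem_singleton, Finset.mem_univ,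
    true_and, not_or]

lemma HMmul_embed_apply (N : Matrix (Fin d) (Fin d) ℂ) {r t : Fin d} (hrt : r ≠ t)
    (a b e f : ℂ) (i c : Fin d) :
    (N * HMembed r t a b e f) i c =
      if c = r then N i r * a + N i t * e
      else if c = t then N i r * b + N i t * f
      else N i c := by
  rw [Matrix.mul_apply, HMsum_split hrt]
  have htail : ∀ m ∈ Finset.univ \ ({r, t} : Finset (Fin d)),
      N i m * HMembed r t a b e f m c = if m = c then N i m else 0 := by
    intro m hm
    rw [HMmem_diff_iff] at hm
    simp only [HMembed, if_neg hm.1, if_neg hm.2]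
    split_ifs <;> simp
  rw [Finset.sum_congr rfl htail, Finset.sum_ite_eq' _ c (fun m => N i m)]
  rcases eq_or_ne c r with rfl | h1
  · simp [HMembed, HMmem_diff_iff, hrt, hrt.symm]
  · rcases eq_or_ne c t with rfl | h2
    · simp [HMembed, HMmem_diff_iff, hrt, hrt.symm, h1]
    · simp [HMembed, HMmem_diff_iff, hrt, hrt.symm, h1, h2]


lemma HMembed_row_r {r t : Fin d} (a b e f : ℂ) (j : Fin d) :
    HMembed r t a b e f r j = if j = r then a else if j = t then b else 0 := by
  simp [HMembed]

lemma HMembed_row_t {r t : Fin d} (hrt : r ≠ t) (a b e f : ℂ) (j : Fin d) :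
    HMembed r t a b e f t j = if j = r then e else if j = t then f else 0 := by
  simp [HMembed, hrt.symm]

lemma HMembed_mem {r t : Fin d} (hrt : r ≠ t) {a b e f : ℂ}
    (h11 : conj a * a + conj e * e = 1) (h12 : conj a * b + conj e * f = 0)
    (h21 : conj b * a + conj f * e = 0) (h22 : conj b * b + conj f * f = 1) :
    HMembed r t a b e f ∈ Matrix.unitaryGroup (Fin d) ℂ := by
  rw [Matrix.mem_unitaryGroup_iff']
  ext i j
  rw [Matrix.mul_apply]
  have hterm : ∀ m : Fin d, (star (HMembed r t a b e f)) i m * HMembed r t a b e f m j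
      = conj (HMembed r t a b e f m i) * HMembed r t a b e f m j := by
    intro m; rw [Matrix.star_apply]; rfl
  rw [Finset.sum_congr rfl (fun m _ => hterm m), HMsum_split hrt]
  have htail : ∀ m ∈ Finset.univ \ ({r, t} : Finset (Fin d)),
      conj (HMembed r t a b e f m i) * HMembed r t a b e f m j
        = if m = i then (if m = j then 1 else 0) else 0 := by
    intro m hm
    rw [HMmem_diff_iff] at hm
    simp only [HMembed, if_neg hm.1, if_neg hm.2]
    split_ifs <;> simp_all
  rw [Finset.sum_congr rfl htail,
    Finset.sum_ite_eq' _ i (fun m => if m = j then (1:ℂ) else 0),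
    if_congr (HMmem_diff_iff i r t) rfl rfl,
    HMembed_row_r, HMembed_row_r, HMembed_row_t hrt, HMembed_row_t hrt, Matrix.one_apply]
  split_ifs <;> simp_all <;>
    first
      | linear_combination h11
      | linear_combination h12
      | linear_combination h21
      | linear_combination h22
      | linear_combination h11 - h22
      | linear_combination (-1 : ℂ) * h12
      | linear_combination (-1 : ℂ) * h21

end HMaux

open Matrix MeasureTheory
open scoped ComplexConjugate

noncomputable section HMmain

variable {d : ℕ} [MeasurableSpace (Matrix.unitaryGroup (Fin d) ℂ)]
  [BorelSpace (Matrix.unitaryGroup (Fin d) ℂ)]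

/-- entry of a unitary matrix -/
def HMent (r q : Fin d) (U : Matrix.unitaryGroup (Fin d) ℂ) : ℂ :=
  (U : Matrix (Fin d) (Fin d) ℂ) r q

lemma HMent_cont (r q : Fin d) : Continuous (HMent r q) :=
  (continuous_apply q).comp ((continuous_apply r).comp continuous_subtype_val)

lemma HMcol_sum (q : Fin d) (U : Matrix.unitaryGroup (Fin d) ℂ) :
    ∑ m, Complex.normSq (HMent m q U) = 1 := by
  have h := Matrix.UnitaryGroup.star_mul_self U
  have h2 : (star (U : Matrix (Fin d) (Fin d) ℂ) * U) q q = (1 : Matrix (Fin d) (Fin d) ℂ) q q := by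
    rw [h]
  rw [Matrix.mul_apply, Matrix.one_apply_eq] at h2
  have h3 : ∀ m : Fin d, star (U : Matrix (Fin d) (Fin d) ℂ) q m * (U : Matrix (Fin d) (Fin d) ℂ) m q
      = ((Complex.normSq (HMent m q U) : ℝ) : ℂ) := by
    intro m
    rw [Matrix.star_apply, Complex.star_def, mul_comm, Complex.mul_conj]
    rfl
  rw [Finset.sum_congr rfl (fun m _ => h3 m), ← Complex.ofReal_sum] at h2
  exact_mod_cast h2

lemma HMent_normSq_le_one (r q : Fin d) (U : Matrix.unitaryGroup (Fin d) ℂ) :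
    Complex.normSq (HMent r q U) ≤ 1 := by
  rw [← HMcol_sum q U]
  exact Finset.single_le_sum (f := fun m => Complex.normSq (HMent m q U))
    (fun m _ => Complex.normSq_nonneg _) (Finset.mem_univ r)

lemma HMent_abs_le_one (r q : Fin d) (U : Matrix.unitaryGroup (Fin d) ℂ) :
    ‖HMent r q U‖ ≤ 1 := by
  have := HMent_normSq_le_one r q U
  rw [Complex.norm_def]
  exact Real.sqrt_le_one.2 this

/-- master complex integrand -/
def HMf (r t q : Fin d) (j l u v : ℕ)
    (U : Matrix.unitaryGroup (Fin d) ℂ) : ℂ :=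
  HMent r q U ^ j * conj (HMent r q U) ^ l * HMent t q U ^ u * conj (HMent t q U) ^ v

/-- master real integrand -/
def HMg (r t q : Fin d) (u v : ℕ) (U : Matrix.unitaryGroup (Fin d) ℂ) : ℝ :=
  Complex.normSq (HMent r q U) ^ u * Complex.normSq (HMent t q U) ^ v

lemma HMf_eq_g (r t q : Fin d) (j u : ℕ) (U : Matrix.unitaryGroup (Fin d) ℂ) :
    HMf r t q j j u u U = ((HMg r t q j u U : ℝ) : ℂ) := by
  unfold HMf HMg
  push_cast
  rw [← Complex.mul_conj, ← Complex.mul_conj]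
  ring

lemma HMf_cont (r t q : Fin d) (j l u v : ℕ) : Continuous (HMf r t q j l u v) := by
  unfold HMf
  exact ((((HMent_cont r q).pow j).mul
    ((Complex.continuous_conj.comp (HMent_cont r q)).pow l)).mul
    ((HMent_cont t q).pow u)).mul ((Complex.continuous_conj.comp (HMent_cont t q)).pow v)

lemma HMf_integrable (r t q : Fin d) (j l u v : ℕ)
    (μ : Measure (Matrix.unitaryGroup (Fin d) ℂ)) [IsProbabilityMeasure μ] :
    Integrable (HMf r t q j l u v) μ := by
  refine (integrable_const (1 : ℝ)).mono' (HMf_cont r t q j l u v).aestronglyMeasurable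
    (Filter.Eventually.of_forall fun U => ?_)
  have hb : ∀ (z : ℂ) (n : ℕ), ‖z‖ ≤ 1 → ‖z ^ n‖ ≤ 1 := by
    intro z n hz
    rw [norm_pow]
    exact pow_le_one₀ (norm_nonneg z) hz
  have h1 := hb _ j (HMent_abs_le_one r q U)
  have h2 := hb _ l (by rw [Complex.norm_conj]; exact HMent_abs_le_one r q U)
  have h3 := hb _ u (HMent_abs_le_one t q U)
  have h4 := hb _ v (by rw [Complex.norm_conj]; exact HMent_abs_le_one t q U)
  have : ‖HMf r t q j l u v U‖ ≤ 1 := by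
    unfold HMf
    rw [norm_mul, norm_mul, norm_mul]
    have n1 := norm_nonneg (HMent r q U ^ j)
    have n2 := norm_nonneg (conj (HMent r q U) ^ l)
    have n3 := norm_nonneg (HMent t q U ^ u)
    have n4 := norm_nonneg (conj (HMent t q U) ^ v)
    first
      | exact mul_le_one₀ (mul_le_one₀ (mul_le_one₀ h1 n2 h2) n3 h3) n4 h4
      | exact mul_le_one (mul_le_one (mul_le_one h1 n2 h2) n3 h3) n4 h4
  simpa using this

end HMmain

noncomputable section HMmain2

variable {d : ℕ}

lemma HMembed_mul_apply (N : Matrix (Fin d) (Fin d) ℂ) {r t : Fin d} (hrt : r ≠ t)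
    (a b e f : ℂ) (i j : Fin d) :
    (HMembed r t a b e f * N) i j =
      if i = r then a * N r j + b * N t j
      else if i = t then e * N r j + f * N t j
      else N i j := by
  rw [Matrix.mul_apply, HMsum_split hrt]
  rcases eq_or_ne i r with rfl | h1
  · rw [if_pos rfl]
    have htail : ∀ m ∈ Finset.univ \ ({i, t} : Finset (Fin d)),
        HMembed i t a b e f i m * N m j = 0 := by
      intro m hm; rw [HMmem_diff_iff] at hm
      simp [HMembed, hm.1, hm.2]
    rw [Finset.sum_eq_zero htail, add_zero]
    simp [HMembed, hrt, hrt.symm]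
  · rcases eq_or_ne i t with rfl | h2
    · rw [if_neg h1, if_pos rfl]
      have htail : ∀ m ∈ Finset.univ \ ({r, i} : Finset (Fin d)),
          HMembed r i a b e f i m * N m j = 0 := by
        intro m hm; rw [HMmem_diff_iff] at hm
        simp [HMembed, h1, hm.1, hm.2]
      rw [Finset.sum_eq_zero htail, add_zero]
      simp [HMembed, hrt, hrt.symm, h1]
    · rw [if_neg h1, if_neg h2]
      have htail : ∀ m ∈ Finset.univ \ ({r, t} : Finset (Fin d)),
          HMembed r t a b e f i m * N m j = if m = i then N m j else 0 := by
        intro m hm; rw [HMmem_diff_iff] at hm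
        simp only [HMembed, if_neg h1, if_neg h2]
        rcases eq_or_ne i m with rfl | him
        · simp
        · simp [him, Ne.symm him]
      rw [Finset.sum_congr rfl htail, Finset.sum_ite_eq' _ i (fun m => N m j),
        if_pos (by rw [HMmem_diff_iff]; exact ⟨h1, h2⟩)]
      simp [HMembed, h1, h2]

variable [MeasurableSpace (Matrix.unitaryGroup (Fin d) ℂ)]
  [BorelSpace (Matrix.unitaryGroup (Fin d) ℂ)]
  (μ : Measure (Matrix.unitaryGroup (Fin d) ℂ)) [IsProbabilityMeasure μ]
  [μ.IsMulLeftInvariant]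

lemma HMent_mul (V : Matrix (Fin d) (Fin d) ℂ) (hV : V ∈ Matrix.unitaryGroup (Fin d) ℂ)
    (U : Matrix.unitaryGroup (Fin d) ℂ) (i q : Fin d) :
    HMent i q ((⟨V, hV⟩ : Matrix.unitaryGroup (Fin d) ℂ) * U)
      = (V * (U : Matrix (Fin d) (Fin d) ℂ)) i q := rfl

/-- vanishing of unbalanced moments -/
lemma HMphase {r t : Fin d} (hrt : r ≠ t) (q : Fin d) (j l u v : ℕ) (hjl : j ≠ l) :
    ∫ U, HMf r t q j l u v U ∂μ = 0 := by
  set θ : ℝ := Real.pi / (j + l + 1) with hθ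
  set α : ℂ := Complex.exp (θ * Complex.I) with hα
  have hconj : conj α = Complex.exp (-(θ * Complex.I)) := by
    rw [hα, ← Complex.exp_conj]
    congr 1
    simp [Complex.conj_ofReal]
  have hαα : conj α * α = 1 := by
    rw [hconj, hα, ← Complex.exp_add]
    simp
  have hmem : HMembed r t α 0 0 1 ∈ Matrix.unitaryGroup (Fin d) ℂ := by
    refine HMembed_mem hrt ?_ ?_ ?_ ?_ <;> simp [hαα]
  set V : Matrix.unitaryGroup (Fin d) ℂ := ⟨HMembed r t α 0 0 1, hmem⟩ with hV
  have key := integral_mul_left_eq_self (μ := μ) (HMf r t q j l u v) V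
  have hpt : ∀ U, HMf r t q j l u v (V * U)
      = (α ^ j * conj α ^ l) * HMf r t q j l u v U := by
    intro U
    have e1 : HMent r q (V * U) = α * HMent r q U := by
      rw [hV, HMent_mul, HMembed_mul_apply _ hrt, if_pos rfl]
      show _ = α * (U : Matrix (Fin d) (Fin d) ℂ) r q
      ring
    have e2 : HMent t q (V * U) = HMent t q U := by
      rw [hV, HMent_mul, HMembed_mul_apply _ hrt, if_neg hrt.symm, if_pos rfl]
      show _ = (U : Matrix (Fin d) (Fin d) ℂ) t q
      ring
    unfold HMf
    rw [e1, e2, _root_.map_mul]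
    ring
  rw [show (fun U => HMf r t q j l u v (V * U))
      = fun U => (α ^ j * conj α ^ l) * HMf r t q j l u v U from funext hpt,
    MeasureTheory.integral_const_mul] at key
  have hθpos : 0 < θ := by rw [hθ]; positivity
  have hne : α ^ j * conj α ^ l ≠ 1 := by
    rw [hα, hconj, ← Complex.exp_nat_mul, ← Complex.exp_nat_mul, ← Complex.exp_add]
    rw [Ne, Complex.exp_eq_one_iff]
    rintro ⟨n, hn⟩
    have him : (j:ℝ) * θ + (l:ℝ) * (-θ) = (n:ℝ) * (2 * Real.pi) := by
      have h := congrArg Complex.im hn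
      simpa using h
    have hπ := Real.pi_pos
    have hd : (0:ℝ) < (j:ℝ) + (l:ℝ) + 1 := by positivity
    have habs : |(j:ℝ) - (l:ℝ)| ≤ (j:ℝ) + (l:ℝ) := by
      rw [abs_sub_le_iff]
      constructor <;> nlinarith [Nat.cast_nonneg (α := ℝ) j, Nat.cast_nonneg (α := ℝ) l]
    have hbound : |((j:ℝ) - (l:ℝ)) * θ| < Real.pi := by
      rw [abs_mul, abs_of_pos hθpos]
      calc |(j:ℝ) - (l:ℝ)| * θ ≤ ((j:ℝ) + (l:ℝ)) * θ :=
            mul_le_mul_of_nonneg_right habs hθpos.le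
        _ < Real.pi := by
            have hrw : ((j:ℝ) + (l:ℝ)) * θ = ((j:ℝ) + (l:ℝ)) * Real.pi / ((j:ℝ) + (l:ℝ) + 1) := by
              rw [hθ]; ring
            rw [hrw, div_lt_iff₀ hd]
            nlinarith
    rcases eq_or_ne n 0 with rfl | hn0
    · have hz : ((j:ℝ) - (l:ℝ)) * θ = 0 := by push_cast at him ⊢; linarith
      rcases mul_eq_zero.1 hz with h | h
      · exact hjl (by exact_mod_cast sub_eq_zero.1 h)
      · exact absurd h hθpos.ne'
    · have h1 : (1:ℝ) ≤ |(n:ℝ)| := by exact_mod_cast Int.one_le_abs hn0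
      have heq : |((j:ℝ) - (l:ℝ)) * θ| = |(n:ℝ)| * (2 * Real.pi) := by
        rw [show ((j:ℝ) - (l:ℝ)) * θ = (j:ℝ) * θ + (l:ℝ) * (-θ) by ring, him, abs_mul,
          abs_of_pos (show (0:ℝ) < 2 * Real.pi by nlinarith [Real.pi_pos])]
      rw [heq] at hbound
      have h2 : 2 * Real.pi ≤ |(n:ℝ)| * (2 * Real.pi) :=
        le_mul_of_one_le_left (by nlinarith [Real.pi_pos]) h1
      linarith
  have hzero : (α ^ j * conj α ^ l - 1) * ∫ U, HMf r t q j l u v U ∂μ = 0 := by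
    rw [sub_mul, one_mul, key, sub_self]
  rcases mul_eq_zero.1 hzero with h | h
  · exact absurd (sub_eq_zero.1 h) hne
  · exact h

end HMmain2

noncomputable section HMmain3

variable {d : ℕ} [MeasurableSpace (Matrix.unitaryGroup (Fin d) ℂ)]
  [BorelSpace (Matrix.unitaryGroup (Fin d) ℂ)]
  (μ : Measure (Matrix.unitaryGroup (Fin d) ℂ)) [IsProbabilityMeasure μ]
  [μ.IsMulLeftInvariant]

lemma HMreal (r t q : Fin d) (j u : ℕ) :
    ∫ U, HMf r t q j j u u U ∂μ = ((∫ U, HMg r t q j u U ∂μ : ℝ) : ℂ) := by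
  rw [show (fun U => HMf r t q j j u u U) = fun U => ((HMg r t q j u U : ℝ) : ℂ)
      from funext (HMf_eq_g r t q j u)]
  exact integral_ofReal

lemma HMg_integrable (r t q : Fin d) (u v : ℕ) :
    Integrable (HMg r t q u v) μ := by
  have h := (HMf_integrable r t q u u v v μ).re
  refine h.congr (Filter.Eventually.of_forall fun U => ?_)
  show RCLike.re (HMf r t q u u v v U) = HMg r t q u v U
  rw [HMf_eq_g]
  simp

/-- the rotation (Bernstein) identity -/
lemma HMrot {r t : Fin d} (hrt : r ≠ t) (q : Fin d) (k : ℕ) {x : ℝ}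
    (hx0 : 0 ≤ x) (hx1 : x ≤ 1) :
    ∑ j ∈ Finset.range (k+1), (k.choose j : ℝ)^2 * x^j * (1-x)^(k-j)
        * (∫ U, HMg r t q j (k-j) U ∂μ)
      = ∫ U, HMg r t q k 0 U ∂μ := by
  set c : ℝ := Real.sqrt x with hc
  set s : ℝ := Real.sqrt (1 - x) with hs
  have hc2 : c^2 = x := Real.sq_sqrt hx0
  have hs2 : s^2 = 1 - x := Real.sq_sqrt (by linarith)
  have hcs : c^2 + s^2 = 1 := by rw [hc2, hs2]; ring
  have h11 : conj (c:ℂ) * c + conj (-(s:ℂ)) * (-(s:ℂ)) = 1 := by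
    rw [Complex.conj_ofReal, ← Complex.ofReal_neg, Complex.conj_ofReal]
    push_cast
    norm_cast
    linear_combination hcs
  have h12 : conj (c:ℂ) * s + conj (-(s:ℂ)) * c = 0 := by
    rw [Complex.conj_ofReal, ← Complex.ofReal_neg, Complex.conj_ofReal]
    push_cast
    ring
  have h21 : conj (s:ℂ) * c + conj (c:ℂ) * (-(s:ℂ)) = 0 := by
    rw [Complex.conj_ofReal, Complex.conj_ofReal]
    push_cast
    ring
  have h22 : conj (s:ℂ) * s + conj (c:ℂ) * c = 1 := by
    rw [Complex.conj_ofReal, Complex.conj_ofReal]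
    push_cast
    norm_cast
    linear_combination hcs
  have hmem : HMembed r t (c:ℂ) (s:ℂ) (-(s:ℂ)) (c:ℂ) ∈ Matrix.unitaryGroup (Fin d) ℂ :=
    HMembed_mem hrt h11 h12 h21 h22
  set V : Matrix.unitaryGroup (Fin d) ℂ := ⟨HMembed r t (c:ℂ) (s:ℂ) (-(s:ℂ)) (c:ℂ), hmem⟩ with hV
  have e1 : ∀ U, HMent r q (V * U) = (c:ℂ) * HMent r q U + (s:ℂ) * HMent t q U := by
    intro U
    rw [hV, HMent_mul, HMembed_mul_apply _ hrt, if_pos rfl]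
    rfl
  have hpt : ∀ U, HMf r t q k k 0 0 (V * U)
      = ∑ j ∈ Finset.range (k+1), ∑ l ∈ Finset.range (k+1),
          ((c:ℂ)^j * (c:ℂ)^l * (s:ℂ)^(k-j) * (s:ℂ)^(k-l)
            * (k.choose j : ℂ) * (k.choose l : ℂ))
            * HMf r t q j l (k-j) (k-l) U := by
    intro U
    have e2 : conj (HMent r q (V * U))
        = (c:ℂ) * conj (HMent r q U) + (s:ℂ) * conj (HMent t q U) := by
      rw [e1, map_add, _root_.map_mul, _root_.map_mul, Complex.conj_ofReal,
        Complex.conj_ofReal]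
    show HMent r q (V*U) ^ k * conj (HMent r q (V*U)) ^ k * HMent t q (V*U) ^ 0
        * conj (HMent t q (V*U)) ^ 0 = _
    rw [pow_zero, pow_zero, mul_one, mul_one, e2, e1, add_pow, add_pow,
      Finset.sum_mul_sum]
    refine Finset.sum_congr rfl fun j hj => Finset.sum_congr rfl fun l hl => ?_
    show _ = _ * (HMent r q U ^ j * conj (HMent r q U) ^ l * HMent t q U ^ (k-j)
      * conj (HMent t q U) ^ (k-l))
    ring
  have key := integral_mul_left_eq_self (μ := μ) (HMf r t q k k 0 0) V
  rw [show (fun U => HMf r t q k k 0 0 (V * U)) = _ from funext hpt] at key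
  rw [integral_finset_sum _ (fun j _ => integrable_finset_sum _
    (fun l _ => (HMf_integrable r t q j l (k-j) (k-l) μ).const_mul _))] at key
  have key2 : ∑ j ∈ Finset.range (k+1),
      ((c:ℂ)^j * (c:ℂ)^j * (s:ℂ)^(k-j) * (s:ℂ)^(k-j)
        * (k.choose j : ℂ) * (k.choose j : ℂ))
        * ∫ U, HMf r t q j j (k-j) (k-j) U ∂μ
      = ∫ U, HMf r t q k k 0 0 U ∂μ := by
    rw [← key]
    refine Finset.sum_congr rfl fun j hj => ?_
    rw [integral_finset_sum _ (fun l _ => (HMf_integrable r t q j l (k-j) (k-l) μ).const_mul _)]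
    rw [Finset.sum_eq_single j]
    · rw [MeasureTheory.integral_const_mul]
    · intro l hl hlj
      rw [MeasureTheory.integral_const_mul, HMphase μ hrt q j l _ _ (Ne.symm hlj), mul_zero]
    · intro hj'; exact absurd hj hj'
  rw [HMreal μ r t q k 0] at key2
  have key3 : ∀ j, ((c:ℂ)^j * (c:ℂ)^j * (s:ℂ)^(k-j) * (s:ℂ)^(k-j)
        * (k.choose j : ℂ) * (k.choose j : ℂ))
        * ∫ U, HMf r t q j j (k-j) (k-j) U ∂μ
      = (((k.choose j : ℝ)^2 * x^j * (1-x)^(k-j) * ∫ U, HMg r t q j (k-j) U ∂μ : ℝ) : ℂ) := by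
    intro j
    rw [HMreal μ r t q j (k-j), ← hs2, ← hc2]
    push_cast
    ring
  rw [Finset.sum_congr rfl (fun j _ => key3 j), ← Complex.ofReal_sum] at key2
  exact_mod_cast key2

end HMmain3

noncomputable section HMmain4

lemma HMpoly_extract (k : ℕ) (A : ℕ → ℝ)
    (h : ∀ x ∈ Set.Icc (0:ℝ) 1,
      ∑ j ∈ Finset.range (k+1), A j * (x^j * (1-x)^(k-j)) = 0) :
    ∀ j ≤ k, A j = 0 := by
  set P : Polynomial ℝ :=
    ∑ j ∈ Finset.range (k+1), Polynomial.C (A j) * ((1 - Polynomial.X)^(k-j) * Polynomial.X^j)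
    with hP
  have hroot : ∀ x ∈ Set.Icc (0:ℝ) 1, P.IsRoot x := by
    intro x hx
    show P.eval x = 0
    rw [hP, Polynomial.eval_finset_sum, ← h x hx]
    refine Finset.sum_congr rfl fun j hj => ?_
    simp only [Polynomial.eval_mul, Polynomial.eval_C, Polynomial.eval_pow,
      Polynomial.eval_sub, Polynomial.eval_one, Polynomial.eval_X]
    ring
  have hPzero : P = 0 := by
    refine Polynomial.eq_zero_of_infinite_isRoot P ?_
    exact Set.Infinite.mono hroot (Set.Icc_infinite (by norm_num))
  intro j
  induction j using Nat.strong_induction_on with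
  | _ j IH =>
    intro hj
    have hco := congrArg (fun Q : Polynomial ℝ => Q.coeff j) hPzero
    simp only [Polynomial.coeff_zero] at hco
    rw [hP, Polynomial.finset_sum_coeff] at hco
    have hterm : ∀ l ∈ Finset.range (k+1),
        (Polynomial.C (A l) * ((1 - Polynomial.X)^(k-l) * Polynomial.X^l)).coeff j
          = A l * (if l ≤ j then ((1 - Polynomial.X : Polynomial ℝ)^(k-l)).coeff (j - l)
              else 0) := by
      intro l hl
      rw [Polynomial.coeff_C_mul, Polynomial.coeff_mul_X_pow']
    rw [Finset.sum_congr rfl hterm, Finset.sum_eq_single j] at hco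
    · rw [if_pos le_rfl, Nat.sub_self, Polynomial.coeff_zero_eq_eval_zero] at hco
      simp only [Polynomial.eval_pow, Polynomial.eval_sub, Polynomial.eval_one,
        Polynomial.eval_X, sub_zero, one_pow, mul_one] at hco
      exact hco
    · intro l hl hlj
      rcases lt_or_gt_of_ne hlj with hlt | hgt
      · rw [IH l hlt (by omega), zero_mul]
      · rw [if_neg (by omega), mul_zero]
    · intro hj'
      exact absurd (Finset.mem_range.2 (by omega)) hj'

variable {d : ℕ} [MeasurableSpace (Matrix.unitaryGroup (Fin d) ℂ)]
  [BorelSpace (Matrix.unitaryGroup (Fin d) ℂ)]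
  (μ : Measure (Matrix.unitaryGroup (Fin d) ℂ)) [IsProbabilityMeasure μ]
  [μ.IsMulLeftInvariant]

lemma HMmoment_eq {r t : Fin d} (hrt : r ≠ t) (q : Fin d) (k j : ℕ) (hj : j ≤ k) :
    (k.choose j : ℝ)^2 * (∫ U, HMg r t q j (k-j) U ∂μ)
      = (k.choose j : ℝ) * ∫ U, HMg r t q k 0 U ∂μ := by
  set N : ℕ → ℝ := fun j => ∫ U, HMg r t q j (k-j) U ∂μ with hN
  set m : ℝ := ∫ U, HMg r t q k 0 U ∂μ with hm
  have hmain : ∀ x ∈ Set.Icc (0:ℝ) 1,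
      ∑ j ∈ Finset.range (k+1),
        ((k.choose j : ℝ)^2 * N j - (k.choose j : ℝ) * m) * (x^j * (1-x)^(k-j)) = 0 := by
    intro x hx
    have h1 := HMrot μ hrt q k hx.1 hx.2
    have hbinom : ∑ j ∈ Finset.range (k+1), x^j * (1-x)^(k-j) * ((k.choose j : ℝ)) = 1 := by
      calc ∑ j ∈ Finset.range (k+1), x^j * (1-x)^(k-j) * ((k.choose j : ℝ))
          = (x + (1-x))^k := (add_pow x (1-x) k).symm
        _ = 1 := by norm_num
    have e : ∀ j, ((k.choose j : ℝ)^2 * N j - (k.choose j : ℝ) * m) * (x^j * (1-x)^(k-j))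
        = ((k.choose j : ℝ)^2 * x^j * (1-x)^(k-j) * N j)
          - (x^j * (1-x)^(k-j) * (k.choose j : ℝ)) * m := fun j => by ring
    rw [Finset.sum_congr rfl (fun j _ => e j), Finset.sum_sub_distrib, h1, ← Finset.sum_mul,
      hbinom, one_mul, sub_self]
  have := HMpoly_extract k _ hmain j hj
  linarith

end HMmain4

noncomputable section HMmain5

variable {d : ℕ} [MeasurableSpace (Matrix.unitaryGroup (Fin d) ℂ)]
  [BorelSpace (Matrix.unitaryGroup (Fin d) ℂ)]
  (μ : Measure (Matrix.unitaryGroup (Fin d) ℂ)) [IsProbabilityMeasure μ]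
  [μ.IsMulLeftInvariant]

/-- swap invariance: for any row `m ≠ i0`, the `(k,1)` mixed moment equals the one with `i1` -/
lemma HMswap (h1 : 1 < d) (m : Fin d) (hm : m ≠ (⟨0, by omega⟩ : Fin d)) (k : ℕ) :
    ∫ U, HMg (⟨0, by omega⟩ : Fin d) m (⟨0, by omega⟩ : Fin d) k 1 U ∂μ
      = ∫ U, HMg (⟨0, by omega⟩ : Fin d) (⟨1, h1⟩ : Fin d) (⟨0, by omega⟩ : Fin d) k 1 U ∂μ := by
  set i0 : Fin d := ⟨0, by omega⟩ with hi0
  set i1 : Fin d := ⟨1, h1⟩ with hi1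
  rcases eq_or_ne m i1 with rfl | hm1
  · rfl
  have h01 : i0 ≠ i1 := by simp [hi0, hi1, Fin.ext_iff]
  have hne : i1 ≠ m := Ne.symm hm1
  have hmem : HMembed i1 m (0:ℂ) 1 1 0 ∈ Matrix.unitaryGroup (Fin d) ℂ := by
    refine HMembed_mem hne ?_ ?_ ?_ ?_ <;> simp
  set V : Matrix.unitaryGroup (Fin d) ℂ := ⟨HMembed i1 m (0:ℂ) 1 1 0, hmem⟩ with hV
  have key := integral_mul_left_eq_self (μ := μ) (HMg i0 i1 i0 k 1) V
  have hpt : ∀ U, HMg i0 i1 i0 k 1 (V * U) = HMg i0 m i0 k 1 U := by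
    intro U
    have e1 : HMent i0 i0 (V * U) = HMent i0 i0 U := by
      rw [hV, HMent_mul, HMembed_mul_apply _ hne, if_neg h01, if_neg (Ne.symm hm)]
      rfl
    have e2 : HMent i1 i0 (V * U) = HMent m i0 U := by
      rw [hV, HMent_mul, HMembed_mul_apply _ hne, if_pos rfl]
      show (0:ℂ) * (U : Matrix (Fin d) (Fin d) ℂ) i1 i0
          + 1 * (U : Matrix (Fin d) (Fin d) ℂ) m i0 = _
      rw [zero_mul, one_mul, zero_add]
      rfl
    unfold HMg
    rw [e1, e2]
  rw [show (fun U => HMg i0 i1 i0 k 1 (V * U)) = HMg i0 m i0 k 1 from funext hpt] at key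
  exact key

lemma HMrecursion (h1 : 1 < d) (k : ℕ) :
    ∫ U, HMg (⟨0, by omega⟩ : Fin d) (⟨1, h1⟩ : Fin d) (⟨0, by omega⟩ : Fin d) k 0 U ∂μ
      = ∫ U, HMg (⟨0, by omega⟩ : Fin d) (⟨1, h1⟩ : Fin d) (⟨0, by omega⟩ : Fin d) (k+1) 0 U ∂μ
        + ((d:ℝ) - 1) *
          ∫ U, HMg (⟨0, by omega⟩ : Fin d) (⟨1, h1⟩ : Fin d) (⟨0, by omega⟩ : Fin d) k 1 U ∂μ := by
  set i0 : Fin d := ⟨0, by omega⟩ with hi0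
  set i1 : Fin d := ⟨1, h1⟩ with hi1
  have hsplit : ∀ U, HMg i0 i1 i0 k 0 U = ∑ m, HMg i0 m i0 k 1 U := by
    intro U
    unfold HMg
    rw [pow_zero, ← HMcol_sum i0 U, Finset.mul_sum]
    exact Finset.sum_congr rfl fun m _ => by rw [pow_one]
  rw [show (fun U => HMg i0 i1 i0 k 0 U) = fun U => ∑ m, HMg i0 m i0 k 1 U from funext hsplit,
    integral_finset_sum _ (fun m _ => HMg_integrable μ i0 m i0 k 1)]
  rw [← Finset.add_sum_erase _ _ (Finset.mem_univ i0)]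
  have hi0term : ∫ U, HMg i0 i0 i0 k 1 U ∂μ = ∫ U, HMg i0 i1 i0 (k+1) 0 U ∂μ := by
    refine integral_congr_ae (Filter.Eventually.of_forall fun U => ?_)
    unfold HMg
    ring
  have hrest : ∀ m ∈ Finset.univ.erase i0,
      ∫ U, HMg i0 m i0 k 1 U ∂μ = ∫ U, HMg i0 i1 i0 k 1 U ∂μ := by
    intro m hm
    exact HMswap μ h1 m (Finset.mem_erase.1 hm).1 k
  rw [Finset.sum_congr rfl hrest, Finset.sum_const, Finset.card_erase_of_mem (Finset.mem_univ i0),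
    Finset.card_univ, Fintype.card_fin, hi0term, nsmul_eq_mul]
  congr 1
  congr 1
  rw [Nat.cast_sub (by omega)]
  norm_num

lemma HMclosed (h1 : 1 < d) (k : ℕ) :
    ∫ U, HMg (⟨0, by omega⟩ : Fin d) (⟨1, h1⟩ : Fin d) (⟨0, by omega⟩ : Fin d) k 0 U ∂μ
      = (k.factorial * (d-1).factorial : ℝ) / ((k + (d-1)).factorial) := by
  set i0 : Fin d := ⟨0, by omega⟩ with hi0
  set i1 : Fin d := ⟨1, h1⟩ with hi1
  have h01 : i0 ≠ i1 := by simp [hi0, hi1, Fin.ext_iff]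
  induction k with
  | zero =>
    have : ∀ U : Matrix.unitaryGroup (Fin d) ℂ, HMg i0 i1 i0 0 0 U = 1 := by
      intro U; unfold HMg; simp
    rw [show (fun U => HMg i0 i1 i0 0 0 U) = fun _ => (1:ℝ) from funext this]
    simp [Nat.factorial_ne_zero]
  | succ k IH =>
    have hrec := HMrecursion μ h1 k
    have hW := HMmoment_eq μ h01 i0 (k+1) k (by omega)
    have hchoose : ((k+1).choose k : ℝ) = (k+1 : ℝ) := by
      rw [Nat.choose_succ_self_right]
      push_cast; ring
    rw [hchoose] at hW
    have hsub : (k + 1 - k) = 1 := by omega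
    rw [hsub] at hW
    -- hW : (k+1)^2 * W = (k+1) * m_{k+1}
    have hk1 : ((k:ℝ) + 1) ≠ 0 := by positivity
    have hWval : ∫ U, HMg i0 i1 i0 k 1 U ∂μ
        = (∫ U, HMg i0 i1 i0 (k+1) 0 U ∂μ) / ((k:ℝ)+1) := by
      field_simp
      nlinarith [hW]
    rw [hWval, IH] at hrec
    -- solve for m_{k+1}
    have hd1 : (1:ℕ) ≤ d := by omega
    have hfac1 : ((k + (d-1)).factorial : ℝ) ≠ 0 := by
      exact_mod_cast (Nat.factorial_pos _).ne'
    have hfac2 : (((k+1) + (d-1)).factorial : ℝ) ≠ 0 := by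
      exact_mod_cast (Nat.factorial_pos _).ne'
    have hstep : (((k+1) + (d-1)).factorial : ℝ)
        = ((k:ℝ) + (d:ℝ)) * ((k + (d-1)).factorial : ℝ) := by
      have : (k+1) + (d-1) = (k + (d-1)) + 1 := by omega
      rw [this, Nat.factorial_succ]
      push_cast [Nat.cast_sub (by omega : (1:ℕ) ≤ d)]
      ring
    have hkd : ((k:ℝ) + (d:ℝ)) ≠ 0 := by positivity
    -- from hrec : k!(d-1)!/(k+d-1)! = m + (d-1) * (m/(k+1))
    -- so m * (k+d)/(k+1) = k!(d-1)!/(k+d-1)!  => m = (k+1)!(d-1)!/((k+1)+(d-1))!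
    have hm : ∫ U, HMg i0 i1 i0 (k+1) 0 U ∂μ
        = ((k+1).factorial * (d-1).factorial : ℝ) / (((k+1) + (d-1)).factorial) := by
      rw [hstep]
      rw [Nat.factorial_succ]
      field_simp at hrec ⊢
      push_cast at hrec ⊢
      nlinarith [hrec]
    exact hm

end HMmain5

noncomputable section HMfinal

lemma HMprod (k d : ℕ) (hd : 1 ≤ d) :
    ∏ n ∈ Finset.Icc 2 d, (2*((n:ℝ)-1))/(2*((n:ℝ)-1)+(2*(k:ℝ)))
      = (k.factorial * (d-1).factorial : ℝ)/((k + (d-1)).factorial) := by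
  induction d, hd using Nat.le_induction with
  | base =>
    rw [Finset.Icc_eq_empty (by omega), Finset.prod_empty]
    simp [Nat.factorial_ne_zero]
  | succ n hn IH =>
    rw [Finset.prod_Icc_succ_top (by omega : 2 ≤ n+1), IH]
    have h1 : (n + 1) - 1 = n := by omega
    rw [h1]
    obtain ⟨m, rfl⟩ : ∃ m, n = m + 1 := ⟨n-1, by omega⟩
    have h2 : (m + 1) - 1 = m := by omega
    rw [h2]
    have hf1 : ((m+1+1:ℕ):ℝ) - 1 = (m:ℝ) + 1 := by push_cast; ring
    rw [hf1]
    have hfac : ((k + (m+1)).factorial : ℝ) = ((k:ℝ) + m + 1) * ((k+m).factorial : ℝ) := by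
      have : k + (m+1) = (k + m) + 1 := by omega
      rw [this, Nat.factorial_succ]
      push_cast; ring
    have hfacm : ((m+1).factorial : ℝ) = ((m:ℝ)+1) * (m.factorial : ℝ) := by
      rw [Nat.factorial_succ]; push_cast; ring
    rw [hfac, hfacm]
    have hne1 : ((k+m).factorial : ℝ) ≠ 0 := by exact_mod_cast (Nat.factorial_pos _).ne'
    have hne2 : ((k:ℝ) + m + 1) ≠ 0 := by positivity
    have hne3 : (2*((m:ℝ)+1)+2*(k:ℝ)) ≠ 0 := by positivity
    field_simp
    ring

theorem haar_moment_entry_aux {d : ℕ} [MeasurableSpace (Matrix.unitaryGroup (Fin d) ℂ)]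
    [BorelSpace (Matrix.unitaryGroup (Fin d) ℂ)]
    (μ : Measure (Matrix.unitaryGroup (Fin d) ℂ)) [IsProbabilityMeasure μ]
    [μ.IsMulLeftInvariant] (hd : 1 ≤ d) (k : ℕ) :
    ∫ U : Matrix.unitaryGroup (Fin d) ℂ,
        Complex.normSq (HMent ⟨0, hd⟩ ⟨0, hd⟩ U) ^ k ∂μ
      = (k.factorial * (d-1).factorial : ℝ) / ((k + (d-1)).factorial) := by
  rcases eq_or_lt_of_le hd with hd1 | hd2
  · have hd1' : d = 1 := hd1.symm
    subst hd1'
    have hone : ∀ U : Matrix.unitaryGroup (Fin 1) ℂ,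
        Complex.normSq (HMent ⟨0, hd⟩ ⟨0, hd⟩ U) ^ k = 1 := by
      intro U
      have hsum := HMcol_sum (⟨0, hd⟩ : Fin 1) U
      rw [Fin.sum_univ_one] at hsum
      have he : (0 : Fin 1) = ⟨0, hd⟩ := Subsingleton.elim _ _
      rw [he] at hsum
      rw [hsum, one_pow]
    rw [show (fun U : Matrix.unitaryGroup (Fin 1) ℂ =>
        Complex.normSq (HMent ⟨0, hd⟩ ⟨0, hd⟩ U) ^ k) = fun _ => (1:ℝ) from funext hone]
    simp [Nat.factorial_ne_zero]
  · have hint2 : ∀ U : Matrix.unitaryGroup (Fin d) ℂ,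
        Complex.normSq (HMent ⟨0, hd⟩ ⟨0, hd⟩ U) ^ k
          = HMg (⟨0, by omega⟩ : Fin d) (⟨1, hd2⟩ : Fin d) (⟨0, by omega⟩ : Fin d) k 0 U := by
      intro U
      unfold HMg
      rw [pow_zero, mul_one]
    rw [show (fun U : Matrix.unitaryGroup (Fin d) ℂ =>
        Complex.normSq (HMent ⟨0, hd⟩ ⟨0, hd⟩ U) ^ k)
        = fun U => HMg (⟨0, by omega⟩ : Fin d) (⟨1, hd2⟩ : Fin d) (⟨0, by omega⟩ : Fin d) k 0 U
        from funext hint2]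
    exact HMclosed μ hd2 k

end HMfinal


/-- Moments of the top-left entry of a Haar-random unitary:
`∫ |U₁₁|^p dμ = ∏_{n=2}^{d} 2(n-1)/(2(n-1)+p)` for even `p`; in particular for
`p = 4` this equals `2/(d(d+1))`. -/
theorem haar_moment_entry (d : ℕ) (hd : 1 ≤ d) (p : ℕ) (hp : Even p)
    [MeasurableSpace (Matrix.unitaryGroup (Fin d) ℂ)]
    [BorelSpace (Matrix.unitaryGroup (Fin d) ℂ)]
    (μ : Measure (Matrix.unitaryGroup (Fin d) ℂ))
    [μ.IsHaarMeasure] [IsProbabilityMeasure μ] :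
    (∫ U : Matrix.unitaryGroup (Fin d) ℂ,
        (‖(U : Matrix (Fin d) (Fin d) ℂ) ⟨0, hd⟩ ⟨0, hd⟩‖) ^ p ∂μ =
      ∏ n ∈ Finset.Icc 2 d, (2 * ((n : ℝ) - 1)) / (2 * ((n : ℝ) - 1) + p)) ∧
    (p = 4 →
      ∫ U : Matrix.unitaryGroup (Fin d) ℂ,
          (‖(U : Matrix (Fin d) (Fin d) ℂ) ⟨0, hd⟩ ⟨0, hd⟩‖) ^ p ∂μ =
        2 / (d * (d + 1))) := by
  obtain ⟨k, hk⟩ := hp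
  have hp2 : p = 2 * k := by omega
  have hint : ∀ U : Matrix.unitaryGroup (Fin d) ℂ,
      (‖(U : Matrix (Fin d) (Fin d) ℂ) ⟨0, hd⟩ ⟨0, hd⟩‖) ^ p
        = Complex.normSq (HMent ⟨0, hd⟩ ⟨0, hd⟩ U) ^ k := by
    intro U
    rw [hp2, pow_mul, Complex.sq_norm]
    rfl
  have hmain : ∫ U : Matrix.unitaryGroup (Fin d) ℂ,
      (‖(U : Matrix (Fin d) (Fin d) ℂ) ⟨0, hd⟩ ⟨0, hd⟩‖) ^ p ∂μ
      = (k.factorial * (d-1).factorial : ℝ) / ((k + (d-1)).factorial) := by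
    rw [show (fun U : Matrix.unitaryGroup (Fin d) ℂ =>
        (‖(U : Matrix (Fin d) (Fin d) ℂ) ⟨0, hd⟩ ⟨0, hd⟩‖) ^ p)
        = fun U => Complex.normSq (HMent ⟨0, hd⟩ ⟨0, hd⟩ U) ^ k from funext hint]
    exact haar_moment_entry_aux μ hd k
  have hcast : ((p:ℕ):ℝ) = 2 * (k:ℝ) := by rw [hp2]; push_cast; ring
  constructor
  · rw [hmain, hcast]
    exact (HMprod k d hd).symm
  · intro hp4
    have hk2 : k = 2 := by omega
    subst hk2
    rw [hmain]
    obtain ⟨m, rfl⟩ : ∃ m, d = m + 1 := ⟨d-1, by omega⟩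
    have h2 : (m + 1) - 1 = m := by omega
    rw [h2]
    have hfac : ((2 + m).factorial : ℝ) = ((m:ℝ)+2) * (((m:ℝ)+1) * (m.factorial : ℝ)) := by
      have : 2 + m = (m + 1) + 1 := by omega
      rw [this, Nat.factorial_succ, Nat.factorial_succ]
      push_cast; ring
    rw [hfac]
    have hne : (m.factorial : ℝ) ≠ 0 := by exact_mod_cast (Nat.factorial_pos _).ne'
    have h1 : ((m:ℝ) + 1) ≠ 0 := by positivity
    have h2' : ((m:ℝ) + 2) ≠ 0 := by positivity
    have hcd : ((m+1 : ℕ):ℝ) = (m:ℝ) + 1 := by push_cast; ring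
    rw [hcd]
    rw [Nat.factorial_two]
    field_simp
    ring
end
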